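/- arXiv:2502.00876 — 2 statements merged into one kernel-verified Lean document; each statement's English description precedes it below -/
import Mathlib

section
/- The $\Lambda$-module $\mathrm{Hom}_{\Lambda}(\mathcal{T},\Lambda)$, where $\mathcal{T} = \mathbb{Q}_p[[X_1,X_2,X_3,X_4]]/(\{X_iX_j\}_{i\ne j})$ is viewed as a $\Lambda = \mathbb{Q}_p[[X]]$-algebra via $X\mapsto X_1+X_2+X_3+X_4$, requires exactly $3$ generators as a $\mathcal{T}$-module, i.e. $\dim_{\mathbb{Q}_p} \mathrm{Hom}_{\Lambda}(\mathcal{T},\Lambda)\otimes_{\mathcal{T}}\mathcal{T}/\mathfrak{m}_{\mathcal{T}} = 3$. -/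
set_option maxHeartbeats 1000000
set_option synthInstance.maxHeartbeats 800000

noncomputable section

/-- The ideal of `ℚ_p[[X₁,X₂,X₃,X₄]]` generated by the mixed products `XᵢXⱼ`, `i ≠ j`. -/
def mixedProductsIdeal (p : ℕ) [Fact p.Prime] : Ideal (MvPowerSeries (Fin 4) ℚ_[p]) :=
  Ideal.span {f | ∃ i j : Fin 4, i ≠ j ∧ f = MvPowerSeries.X i * MvPowerSeries.X j}

/-- `𝒯 = ℚ_p[[X₁,…,X₄]]/({XᵢXⱼ}_{i≠j})`. -/
abbrev Tring (p : ℕ) [Fact p.Prime] :=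
  MvPowerSeries (Fin 4) ℚ_[p] ⧸ mixedProductsIdeal p

/-- The maximal ideal `𝔪_𝒯` of `𝒯`, generated by the images of the `Xᵢ`. -/
def maxIdealT (p : ℕ) [Fact p.Prime] : Ideal (Tring p) :=
  Ideal.span (Set.range fun i : Fin 4 =>
    Ideal.Quotient.mk (mixedProductsIdeal p) (MvPowerSeries.X i))

namespace HG3

open MvPowerSeries Finsupp

variable (p : ℕ) [Fact p.Prime]

local notation "R4" => MvPowerSeries (Fin 4) ℚ_[p]
local notation "Λp" => PowerSeries ℚ_[p]

/-- The quotient map. -/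
def mkT : R4 →+* Tring p := Ideal.Quotient.mk (mixedProductsIdeal p)

/-- Images of the variables. -/
def Xb (i : Fin 4) : Tring p := mkT p (MvPowerSeries.X i)

/-- The ideal of series all of whose "pure" coefficients vanish. -/
def pureIdeal : Ideal R4 where
  carrier := {F | ∀ (i : Fin 4) (n : ℕ), MvPowerSeries.coeff (single i n) F = 0}
  add_mem' := by intro a b ha hb i n; simp [ha i n, hb i n]
  zero_mem' := by intro i n; simp
  smul_mem' := by
    classical
    intro c F hF i n
    rw [smul_eq_mul, MvPowerSeries.coeff_mul]
    apply Finset.sum_eq_zero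
    rintro ⟨β, γ⟩ hmem
    have hadd : β + γ = single i n := Finset.HasAntidiagonal.mem_antidiagonal.1 hmem
    have hγ : γ = single i (γ i) := by
      ext j
      rcases eq_or_ne j i with rfl | hj
      · simp
      · have h0 : (β + γ) j = 0 := by rw [hadd, single_eq_of_ne hj]
        have : γ j = 0 := by
          have := Finsupp.add_apply β γ j; omega
        rw [this, single_eq_of_ne hj]
    simp only []
    rw [show (MvPowerSeries.coeff γ) F = 0 by rw [hγ]; exact hF i (γ i), mul_zero]

theorem mixed_le_pure : mixedProductsIdeal p ≤ pureIdeal p := by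
  classical
  rw [mixedProductsIdeal, Ideal.span_le]
  rintro f ⟨i, j, hij, rfl⟩
  intro k n
  rw [show (MvPowerSeries.X i * MvPowerSeries.X j : R4)
      = MvPowerSeries.monomial (single i 1 + single j 1) 1 by
    rw [X_def, X_def, monomial_mul_monomial, one_mul]]
  rw [MvPowerSeries.coeff_monomial]
  split_ifs with h
  · exfalso
    have hi : single i 1 + single j 1 = single k n := h.symm ▸ rfl
    have h1 : (single i 1 + single j 1 : Fin 4 →₀ ℕ) i ≥ 1 := by
      simp [Finsupp.add_apply]
    have h2 : (single i 1 + single j 1 : Fin 4 →₀ ℕ) j ≥ 1 := by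
      simp [Finsupp.add_apply]
    rw [hi] at h1 h2
    rcases eq_or_ne i k with rfl | hik
    · rw [single_eq_of_ne (Ne.symm hij)] at h2; omega
    · rw [single_eq_of_ne hik] at h1; omega
  · rfl

theorem coeff_of_mem_mixed {F : R4} (hF : F ∈ mixedProductsIdeal p) (i : Fin 4) (n : ℕ) :
    MvPowerSeries.coeff (single i n) F = 0 :=
  mixed_le_pure p hF i n


/-- selection of the (min, max) of the support -/
def sel (α : Fin 4 →₀ ℕ) : Fin 4 × Fin 4 :=
  if h : α.support.Nonempty then (α.support.min' h, α.support.max' h) else (0, 0)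

theorem mem_mixed_of_pure_coeff_zero (F : R4)
    (hF : ∀ (i : Fin 4) (n : ℕ), MvPowerSeries.coeff (single i n) F = 0) :
    F ∈ mixedProductsIdeal p := by
  classical
  set G : Fin 4 → Fin 4 → R4 := fun i j β =>
    if sel (β + (single i 1 + single j 1)) = (i, j)
    then MvPowerSeries.coeff (β + (single i 1 + single j 1)) F else 0 with hG
  have key : F = ∑ q ∈ Finset.univ.filter (fun q : Fin 4 × Fin 4 => q.1 ≠ q.2),
      MvPowerSeries.X q.1 * MvPowerSeries.X q.2 * G q.1 q.2 := by
    apply MvPowerSeries.ext; intro α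
    rw [map_sum]
    have hterm : ∀ q : Fin 4 × Fin 4,
        MvPowerSeries.coeff α (MvPowerSeries.X q.1 * MvPowerSeries.X q.2 * G q.1 q.2)
        = if (single q.1 1 + single q.2 1) ≤ α ∧ sel α = q
          then MvPowerSeries.coeff α F else 0 := by
      rintro ⟨i, j⟩
      rw [show (MvPowerSeries.X i * MvPowerSeries.X j : R4)
          = MvPowerSeries.monomial (single i 1 + single j 1) 1 by
        rw [X_def, X_def, monomial_mul_monomial, one_mul]]
      rw [MvPowerSeries.coeff_monomial_mul, one_mul]
      by_cases hle : (single i 1 + single j 1) ≤ α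
      · rw [if_pos hle]
        have hcan : α - (single i 1 + single j 1) + (single i 1 + single j 1) = α :=
          tsub_add_cancel_of_le hle
        rw [MvPowerSeries.coeff_apply]
        simp only [hG, hcan]
        by_cases hs : sel α = (i, j)
        · rw [if_pos hs, if_pos ⟨hle, hs⟩]
        · rw [if_neg hs, if_neg (by tauto)]
      · rw [if_neg hle, if_neg (by tauto)]
    rw [Finset.sum_congr rfl (fun q _ => hterm q)]
    by_cases hcard : 2 ≤ α.support.card
    · have hne : α.support.Nonempty := Finset.card_pos.1 (by omega)
      set i₀ := α.support.min' hne with hi₀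
      set j₀ := α.support.max' hne with hj₀
      have hij₀ : i₀ ≠ j₀ := ne_of_lt (Finset.min'_lt_max'_of_card _ (by omega))
      have hsel : sel α = (i₀, j₀) := by rw [sel, dif_pos hne]
      have hle₀ : single i₀ 1 + single j₀ 1 ≤ α := by
        rw [Finsupp.le_def]
        intro k
        rw [Finsupp.add_apply]
        have hmi : α i₀ ≠ 0 := Finsupp.mem_support_iff.1 (α.support.min'_mem hne)
        have hmj : α j₀ ≠ 0 := Finsupp.mem_support_iff.1 (α.support.max'_mem hne)
        rcases eq_or_ne k i₀ with rfl | hki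
        · rw [single_eq_same, single_eq_of_ne hij₀]; omega
        · rw [single_eq_of_ne hki]
          rcases eq_or_ne k j₀ with rfl | hkj
          · rw [single_eq_same]; omega
          · rw [single_eq_of_ne hkj]; omega
      rw [Finset.sum_eq_single_of_mem (i₀, j₀)
        (Finset.mem_filter.2 ⟨Finset.mem_univ _, hij₀⟩)
        (fun b _ hb => if_neg (by rintro ⟨-, hc⟩; exact hb (hc.symm.trans hsel)))]
      rw [if_pos ⟨hle₀, hsel⟩]
    · have hpure : ∃ a, α = single a (α a) := Finsupp.card_support_le_one.1 (by omega)
      obtain ⟨a, ha⟩ := hpure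
      have hFα : MvPowerSeries.coeff α F = 0 := by rw [ha]; exact hF a (α a)
      rw [hFα]
      simp
  rw [key]
  apply Ideal.sum_mem
  rintro ⟨i, j⟩ hq
  exact Ideal.mul_mem_right _ _ (Ideal.subset_span ⟨i, j, (Finset.mem_filter.1 hq).2, rfl⟩)



/-- The ideal of series of order at least `n`. -/
def degIdeal (n : ℕ) : Ideal R4 where
  carrier := {F | ∀ α : Fin 4 →₀ ℕ, (∑ j, α j) < n → MvPowerSeries.coeff α F = 0}
  add_mem' := by intro a b ha hb α hα; simp [ha α hα, hb α hα]
  zero_mem' := by intro α hα; simp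
  smul_mem' := by
    classical
    intro c F hF α hα
    rw [smul_eq_mul, MvPowerSeries.coeff_mul]
    apply Finset.sum_eq_zero
    rintro ⟨β, γ⟩ hmem
    have hadd : β + γ = α := Finset.HasAntidiagonal.mem_antidiagonal.1 hmem
    have hsum : (∑ j, β j) + (∑ j, γ j) = ∑ j, α j := by
      rw [← Finset.sum_add_distrib]
      apply Finset.sum_congr rfl
      intro j _
      rw [← hadd, Finsupp.add_apply]
    rw [hF γ (by omega), mul_zero]

theorem mul_mem_degIdeal {a b : ℕ} {F G : R4} (hF : F ∈ degIdeal p a) (hG : G ∈ degIdeal p b) :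
    F * G ∈ degIdeal p (a + b) := by
  classical
  intro α hα
  rw [MvPowerSeries.coeff_mul]
  apply Finset.sum_eq_zero
  rintro ⟨β, γ⟩ hmem
  have hadd : β + γ = α := Finset.HasAntidiagonal.mem_antidiagonal.1 hmem
  have hsum : (∑ j, β j) + (∑ j, γ j) = ∑ j, α j := by
    rw [← Finset.sum_add_distrib]
    exact Finset.sum_congr rfl fun j _ => by rw [← hadd, Finsupp.add_apply]
  by_cases hβ : (∑ j, β j) < a
  · rw [hF β hβ, zero_mul]
  · rw [hG γ (by omega), mul_zero]

/-- The ideal generated by the variables. -/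
def Jvar : Ideal R4 := Ideal.span (Set.range (MvPowerSeries.X : Fin 4 → R4))

theorem Jvar_le_degIdeal : Jvar p ≤ degIdeal p 1 := by
  classical
  rw [Jvar, Ideal.span_le]
  rintro f ⟨i, rfl⟩
  intro α hα
  have hα0 : α = 0 := by
    ext j
    have : α j ≤ ∑ k, α k := Finset.single_le_sum (fun k _ => Nat.zero_le _) (Finset.mem_univ j)
    simp only [Finsupp.coe_zero, Pi.zero_apply]
    omega
  rw [hα0, MvPowerSeries.coeff_X]
  rw [if_neg]
  intro h
  have := congrArg (fun f : Fin 4 →₀ ℕ => f i) h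
  simp at this

theorem Jvar_pow_le (n : ℕ) : (Jvar p) ^ n ≤ degIdeal p n := by
  induction n with
  | zero =>
    intro F _
    intro α hα
    omega
  | succ n ih =>
    rw [pow_succ]
    apply Ideal.mul_le.2
    intro r hr s hs
    exact mul_mem_degIdeal p (ih hr) (Jvar_le_degIdeal p hs)

theorem maxIdealT_eq_map : maxIdealT p = Ideal.map (mkT p) (Jvar p) := by
  rw [Jvar, Ideal.map_span, ← Set.range_comp]
  rfl

theorem eq_zero_of_mem_pow (y : Tring p) (hy : ∀ n, y ∈ (maxIdealT p) ^ n) : y = 0 := by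
  obtain ⟨F, rfl⟩ := Ideal.Quotient.mk_surjective y
  have hpure : ∀ (i : Fin 4) (m : ℕ), MvPowerSeries.coeff (single i m) F = 0 := by
    intro i m
    have hmem : Ideal.Quotient.mk (mixedProductsIdeal p) F ∈
        Ideal.map (mkT p) ((Jvar p) ^ (m + 1)) := by
      rw [Ideal.map_pow, ← maxIdealT_eq_map]
      exact hy (m + 1)
    obtain ⟨G, hG, hGy⟩ :=
      (Ideal.mem_map_iff_of_surjective _ Ideal.Quotient.mk_surjective).1 hmem
    have h1 : MvPowerSeries.coeff (single i m) G = 0 := by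
      apply Jvar_pow_le p (m + 1) hG
      have : ∑ j, (single i m : Fin 4 →₀ ℕ) j = m := by
        rw [Finset.sum_eq_single i (fun j _ hj => single_eq_of_ne hj)
          (fun h => absurd (Finset.mem_univ i) h)]
        exact single_eq_same
      omega
    have hFG : F - G ∈ mixedProductsIdeal p := by
      rw [← Ideal.Quotient.eq]
      exact hGy.symm
    have h2 : MvPowerSeries.coeff (single i m) (F - G) = 0 :=
      coeff_of_mem_mixed p hFG i m
    rw [map_sub] at h2
    rw [h1] at h2
    simpa using h2
  rw [Ideal.Quotient.eq_zero_iff_mem]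
  exact mem_mixed_of_pure_coeff_zero p F hpure



theorem deg_single (i : Fin 4) (n : ℕ) : ∑ j, (single i n : Fin 4 →₀ ℕ) j = n := by
  rw [Finset.sum_eq_single i (fun j _ hj => single_eq_of_ne hj)
    (fun h => absurd (Finset.mem_univ i) h)]
  exact single_eq_same

open Classical in
/-- The canonical "diagonal" lift of a one-variable power series. -/
def Canon (f : Λp) : R4 := fun α =>
  if ∃ i : Fin 4, α = single i (α i) then PowerSeries.coeff (∑ j, α j) f else 0

theorem canon_coeff_single (f : Λp) (i : Fin 4) (n : ℕ) :
    MvPowerSeries.coeff (single i n) (Canon p f) = PowerSeries.coeff n f := by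
  rw [MvPowerSeries.coeff_apply]
  unfold Canon
  rw [if_pos ⟨i, by rw [single_eq_same]⟩, deg_single]

theorem canon_coeff_notpure (f : Λp) (α : Fin 4 →₀ ℕ) (hα : ¬∃ i : Fin 4, α = single i (α i)) :
    MvPowerSeries.coeff α (Canon p f) = 0 := by
  rw [MvPowerSeries.coeff_apply]
  unfold Canon
  rw [if_neg hα]

theorem canon_add (f g : Λp) : Canon p (f + g) = Canon p f + Canon p g := by
  apply MvPowerSeries.ext; intro α
  rw [map_add]
  by_cases hα : ∃ i : Fin 4, α = single i (α i)
  · obtain ⟨i, hi⟩ := hα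
    rw [hi, canon_coeff_single, canon_coeff_single, canon_coeff_single, map_add]
  · rw [canon_coeff_notpure p _ _ hα, canon_coeff_notpure p _ _ hα,
      canon_coeff_notpure p _ _ hα, add_zero]

theorem canon_C (a : ℚ_[p]) :
    Canon p (PowerSeries.C a) = MvPowerSeries.C a := by
  classical
  apply MvPowerSeries.ext; intro α
  by_cases hα : ∃ i : Fin 4, α = single i (α i)
  · obtain ⟨i, hi⟩ := hα
    rw [hi, canon_coeff_single, MvPowerSeries.coeff_C, PowerSeries.coeff_C]
    rcases eq_or_ne (α i) 0 with h0 | h0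
    · rw [if_pos h0, if_pos (by rw [h0, single_zero])]
    · rw [if_neg h0, if_neg]
      intro hc
      have := congrArg (fun f : Fin 4 →₀ ℕ => f i) hc
      simp at this
      exact h0 this
  · rw [canon_coeff_notpure p _ _ hα, MvPowerSeries.coeff_C, if_neg]
    intro hc
    exact hα ⟨0, by rw [hc]; simp⟩

theorem single_add_le_iff {i k : Fin 4} {n : ℕ} :
    (single i 1 : Fin 4 →₀ ℕ) ≤ single k n ↔ (i = k ∧ 1 ≤ n) := by
  constructor
  · intro h
    have hi := Finsupp.le_def.1 h i
    rw [single_eq_same] at hi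
    rcases eq_or_ne i k with rfl | hik
    · rw [single_eq_same] at hi; exact ⟨rfl, hi⟩
    · rw [single_eq_of_ne hik] at hi; omega
  · rintro ⟨rfl, hn⟩
    rw [Finsupp.le_def]
    intro j
    rcases eq_or_ne j i with rfl | hj
    · rw [single_eq_same, single_eq_same]; omega
    · rw [single_eq_of_ne hj]; omega

theorem single_sub_single (k : Fin 4) (n : ℕ) :
    (single k n : Fin 4 →₀ ℕ) - single k 1 = single k (n - 1) := by
  rw [← Finsupp.single_tsub]

/-- Pure coefficients of `Canon f * X i`. -/
theorem coeff_single_canon_mul_X (f : Λp) (i k : Fin 4) (n : ℕ) :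
    MvPowerSeries.coeff (single k n) (Canon p f * MvPowerSeries.X i) =
      if k = i ∧ 1 ≤ n then PowerSeries.coeff (n - 1) f else 0 := by
  classical
  rw [X_def, MvPowerSeries.coeff_mul_monomial]
  by_cases hc : i = k ∧ 1 ≤ n
  · obtain ⟨rfl, hn⟩ := hc
    rw [if_pos (single_add_le_iff.2 ⟨rfl, hn⟩), if_pos ⟨rfl, hn⟩,
      single_sub_single, canon_coeff_single, mul_one]
  · rw [if_neg (fun h => hc (single_add_le_iff.1 h)), if_neg (fun h => hc ⟨h.1.symm, h.2⟩)]

theorem canon_X_mul (f : Λp) :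
    mkT p (Canon p (PowerSeries.X * f)) =
      mkT p ((∑ i : Fin 4, MvPowerSeries.X i) * Canon p f) := by
  classical
  rw [← sub_eq_zero, ← map_sub, ← RingHom.mem_ker]
  have hker : RingHom.ker (mkT p) = mixedProductsIdeal p := Ideal.mk_ker
  rw [hker]
  apply mem_mixed_of_pure_coeff_zero
  intro k n
  rw [map_sub]
  have hL : MvPowerSeries.coeff (single k n) (Canon p (PowerSeries.X * f)) =
      if 1 ≤ n then PowerSeries.coeff (n - 1) f else 0 := by
    rw [canon_coeff_single]
    rcases Nat.eq_zero_or_pos n with rfl | hn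
    · rw [if_neg (by omega), PowerSeries.coeff_zero_eq_constantCoeff, map_mul]
      simp
    · obtain ⟨m, rfl⟩ := Nat.exists_eq_add_of_lt hn
      rw [if_pos (by omega)]
      have h1 : 0 + m + 1 = m + 1 := by omega
      rw [h1, PowerSeries.coeff_succ_X_mul]
      have h2 : m + 1 - 1 = m := by omega
      rw [h2]
  have hR : MvPowerSeries.coeff (single k n)
      ((∑ i : Fin 4, MvPowerSeries.X i) * Canon p f) =
      if 1 ≤ n then PowerSeries.coeff (n - 1) f else 0 := by
    rw [Finset.sum_mul, map_sum]
    have : ∀ i : Fin 4, MvPowerSeries.coeff (single k n)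
        (MvPowerSeries.X i * Canon p f) =
        if k = i ∧ 1 ≤ n then PowerSeries.coeff (n - 1) f else 0 := by
      intro i
      rw [mul_comm, coeff_single_canon_mul_X]
    rw [Finset.sum_congr rfl (fun i _ => this i)]
    by_cases hn : 1 ≤ n
    · rw [Finset.sum_eq_single k (fun j _ hj => if_neg (fun h => hj h.1.symm))
        (fun h => absurd (Finset.mem_univ k) h), if_pos ⟨rfl, hn⟩, if_pos hn]
    · rw [if_neg hn]
      apply Finset.sum_eq_zero
      intro i _
      rw [if_neg (fun h => hn h.2)]
  rw [hL, hR, sub_self]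



section Master

theorem master [Algebra Λp (Tring p)]
    (h1 : ∀ a : ℚ_[p], algebraMap Λp (Tring p) (PowerSeries.C a)
      = algebraMap ℚ_[p] (Tring p) a)
    (h2 : algebraMap Λp (Tring p) PowerSeries.X
      = Ideal.Quotient.mk (mixedProductsIdeal p) (∑ i : Fin 4, MvPowerSeries.X i))
    (f : Λp) : algebraMap Λp (Tring p) f = mkT p (Canon p f) := by
  rw [← sub_eq_zero]
  apply eq_zero_of_mem_pow
  intro n
  induction n generalizing f with
  | zero => rw [pow_zero, Ideal.one_eq_top]; exact Submodule.mem_top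
  | succ n ih =>
    set a := PowerSeries.constantCoeff f with ha
    set f' : Λp := PowerSeries.mk (fun k => PowerSeries.coeff (k + 1) f) with hf'
    have hdec : f = PowerSeries.C a + PowerSeries.X * f' := by
      ext k
      rcases Nat.eq_zero_or_pos k with rfl | hk
      · simp [ha, PowerSeries.coeff_zero_eq_constantCoeff]
      · obtain ⟨m, rfl⟩ := Nat.exists_eq_add_of_lt hk
        rw [map_add, PowerSeries.coeff_C]
        have h1' : 0 + m + 1 = m + 1 := by omega
        rw [h1', PowerSeries.coeff_succ_X_mul, hf', PowerSeries.coeff_mk,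
          if_neg (by omega), zero_add]
    have ht : mkT p (∑ i : Fin 4, MvPowerSeries.X i) ∈ maxIdealT p := by
      rw [map_sum]
      apply Ideal.sum_mem
      intro i _
      exact Ideal.subset_span ⟨i, rfl⟩
    have h2' : algebraMap Λp (Tring p) PowerSeries.X
        = mkT p (∑ i : Fin 4, MvPowerSeries.X i) := h2
    have hCa : mkT p (MvPowerSeries.C a) = algebraMap ℚ_[p] (Tring p) a := by
      rw [MvPowerSeries.c_eq_algebraMap]
      show Ideal.Quotient.mk (mixedProductsIdeal p) (algebraMap ℚ_[p] R4 a)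
          = algebraMap ℚ_[p] (Tring p) a
      rfl
    have hsplit : algebraMap Λp (Tring p) f - mkT p (Canon p f)
        = mkT p (∑ i : Fin 4, MvPowerSeries.X i) *
          (algebraMap Λp (Tring p) f' - mkT p (Canon p f')) := by
      conv_lhs => rw [hdec]
      rw [map_add, map_mul, h1, h2', canon_add, map_add, canon_C, hCa, canon_X_mul, map_mul]
      ring
    rw [hsplit, pow_succ']
    exact Ideal.mul_mem_mul ht (ih f')

end Master



section BasisSec

theorem smul_def' [Algebra (PowerSeries ℚ_[p]) (Tring p)]
    (h1 : ∀ a : ℚ_[p], algebraMap Λp (Tring p) (PowerSeries.C a)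
      = algebraMap ℚ_[p] (Tring p) a)
    (h2 : algebraMap Λp (Tring p) PowerSeries.X
      = Ideal.Quotient.mk (mixedProductsIdeal p) (∑ i : Fin 4, MvPowerSeries.X i))
    (f : Λp) (x : Tring p) : f • x = mkT p (Canon p f) * x := by
  rw [Algebra.smul_def, master p h1 h2]

/-- The four elements `1, X₀, X₁, X₂` of `𝒯`. -/
def bvec : Fin 4 → Tring p := ![1, Xb p 0, Xb p 1, Xb p 2]

theorem comb_eq [Algebra (PowerSeries ℚ_[p]) (Tring p)]
    (h1 : ∀ a : ℚ_[p], algebraMap Λp (Tring p) (PowerSeries.C a)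
      = algebraMap ℚ_[p] (Tring p) a)
    (h2 : algebraMap Λp (Tring p) PowerSeries.X
      = Ideal.Quotient.mk (mixedProductsIdeal p) (∑ i : Fin 4, MvPowerSeries.X i))
    (g : Fin 4 → Λp) :
    ∑ i, g i • bvec p i = mkT p (Canon p (g 0) + Canon p (g 1) * MvPowerSeries.X 0
      + Canon p (g 2) * MvPowerSeries.X 1 + Canon p (g 3) * MvPowerSeries.X 2) := by
  have hb0 : bvec p 0 = 1 := rfl
  have hb1 : bvec p 1 = mkT p (MvPowerSeries.X 0) := rfl
  have hb2 : bvec p 2 = mkT p (MvPowerSeries.X 1) := rfl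
  have hb3 : bvec p 3 = mkT p (MvPowerSeries.X 2) := rfl
  rw [Fin.sum_univ_four, hb0, hb1, hb2, hb3]
  rw [smul_def' p h1 h2, smul_def' p h1 h2, smul_def' p h1 h2, smul_def' p h1 h2,
    mul_one, ← map_mul, ← map_mul, ← map_mul, ← map_add, ← map_add, ← map_add]

theorem coeff_comb (g : Fin 4 → Λp) (k : Fin 4) (n : ℕ) :
    MvPowerSeries.coeff (single k n)
      (Canon p (g 0) + Canon p (g 1) * MvPowerSeries.X 0 + Canon p (g 2) * MvPowerSeries.X 1
        + Canon p (g 3) * MvPowerSeries.X 2)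
    = PowerSeries.coeff n (g 0)
      + (if k = 0 ∧ 1 ≤ n then PowerSeries.coeff (n - 1) (g 1) else 0)
      + (if k = 1 ∧ 1 ≤ n then PowerSeries.coeff (n - 1) (g 2) else 0)
      + (if k = 2 ∧ 1 ≤ n then PowerSeries.coeff (n - 1) (g 3) else 0) := by
  rw [map_add, map_add, map_add, canon_coeff_single, coeff_single_canon_mul_X,
    coeff_single_canon_mul_X, coeff_single_canon_mul_X]

theorem indep [Algebra (PowerSeries ℚ_[p]) (Tring p)]
    (h1 : ∀ a : ℚ_[p], algebraMap Λp (Tring p) (PowerSeries.C a)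
      = algebraMap ℚ_[p] (Tring p) a)
    (h2 : algebraMap Λp (Tring p) PowerSeries.X
      = Ideal.Quotient.mk (mixedProductsIdeal p) (∑ i : Fin 4, MvPowerSeries.X i)) :
    LinearIndependent Λp (bvec p) := by
  rw [Fintype.linearIndependent_iff]
  intro g hg
  have h0 : mkT p (Canon p (g 0) + Canon p (g 1) * MvPowerSeries.X 0
      + Canon p (g 2) * MvPowerSeries.X 1 + Canon p (g 3) * MvPowerSeries.X 2) = 0 := by
    rw [← comb_eq p h1 h2 g, hg]
  have hW : (Canon p (g 0) + Canon p (g 1) * MvPowerSeries.X 0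
      + Canon p (g 2) * MvPowerSeries.X 1 + Canon p (g 3) * MvPowerSeries.X 2)
      ∈ mixedProductsIdeal p := Ideal.Quotient.eq_zero_iff_mem.1 h0
  have hcoeff : ∀ (k : Fin 4) (n : ℕ),
      PowerSeries.coeff n (g 0)
      + (if k = 0 ∧ 1 ≤ n then PowerSeries.coeff (n - 1) (g 1) else 0)
      + (if k = 1 ∧ 1 ≤ n then PowerSeries.coeff (n - 1) (g 2) else 0)
      + (if k = 2 ∧ 1 ≤ n then PowerSeries.coeff (n - 1) (g 3) else 0) = 0 := by
    intro k n
    rw [← coeff_comb]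
    exact coeff_of_mem_mixed p hW k n
  have hg0 : g 0 = 0 := by
    ext m
    have := hcoeff 3 m
    simpa using this
  have e1 : g 1 = 0 := by
    ext m
    have := hcoeff 0 (m + 1)
    rw [hg0] at this
    simpa using this
  have e2 : g 2 = 0 := by
    ext m
    have := hcoeff 1 (m + 1)
    rw [hg0] at this
    simpa using this
  have e3 : g 3 = 0 := by
    ext m
    have := hcoeff 2 (m + 1)
    rw [hg0] at this
    simpa using this
  intro i
  match i with
  | 0 => exact hg0
  | 1 => exact e1
  | 2 => exact e2
  | 3 => exact e3

theorem spans [Algebra (PowerSeries ℚ_[p]) (Tring p)]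
    (h1 : ∀ a : ℚ_[p], algebraMap Λp (Tring p) (PowerSeries.C a)
      = algebraMap ℚ_[p] (Tring p) a)
    (h2 : algebraMap Λp (Tring p) PowerSeries.X
      = Ideal.Quotient.mk (mixedProductsIdeal p) (∑ i : Fin 4, MvPowerSeries.X i)) :
    ⊤ ≤ Submodule.span Λp (Set.range (bvec p)) := by
  intro x _
  obtain ⟨F, rfl⟩ := Ideal.Quotient.mk_surjective x
  set g : Fin 4 → Λp :=
    ![PowerSeries.mk fun n => MvPowerSeries.coeff (single 3 n) F,
      PowerSeries.mk fun n => MvPowerSeries.coeff (single 0 (n + 1)) F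
        - MvPowerSeries.coeff (single 3 (n + 1)) F,
      PowerSeries.mk fun n => MvPowerSeries.coeff (single 1 (n + 1)) F
        - MvPowerSeries.coeff (single 3 (n + 1)) F,
      PowerSeries.mk fun n => MvPowerSeries.coeff (single 2 (n + 1)) F
        - MvPowerSeries.coeff (single 3 (n + 1)) F] with hgdef
  have hx : Ideal.Quotient.mk (mixedProductsIdeal p) F = ∑ i, g i • bvec p i := by
    rw [comb_eq p h1 h2 g]
    apply Ideal.Quotient.eq.2
    apply mem_mixed_of_pure_coeff_zero
    intro k n
    rw [map_sub, coeff_comb]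
    have hg0 : g 0 = PowerSeries.mk fun n => MvPowerSeries.coeff (single 3 n) F := rfl
    have hg1 : g 1 = PowerSeries.mk fun n => MvPowerSeries.coeff (single 0 (n + 1)) F
        - MvPowerSeries.coeff (single 3 (n + 1)) F := rfl
    have hg2 : g 2 = PowerSeries.mk fun n => MvPowerSeries.coeff (single 1 (n + 1)) F
        - MvPowerSeries.coeff (single 3 (n + 1)) F := rfl
    have hg3 : g 3 = PowerSeries.mk fun n => MvPowerSeries.coeff (single 2 (n + 1)) F
        - MvPowerSeries.coeff (single 3 (n + 1)) F := rfl
    rcases Nat.eq_zero_or_pos n with rfl | hn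
    · have hz : (single k 0 : Fin 4 →₀ ℕ) = 0 := single_zero k
      have hz3 : (single (3 : Fin 4) 0 : Fin 4 →₀ ℕ) = 0 := single_zero 3
      rw [hz]
      have hcc : PowerSeries.coeff 0 (g 0) = MvPowerSeries.coeff 0 F := by
        rw [hg0, PowerSeries.coeff_mk, hz3]
      rw [hcc]
      simp
    · obtain ⟨m, rfl⟩ := Nat.exists_eq_add_of_lt hn
      have hm1 : 0 + m + 1 = m + 1 := by omega
      rw [hm1]
      have hm2 : m + 1 - 1 = m := by omega
      fin_cases k <;>
        simp [hg0, hg1, hg2, hg3, PowerSeries.coeff_mk, hm2] <;> ring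
  rw [hx]
  exact Submodule.sum_smul_mem _ _ (fun i _ => Submodule.subset_span ⟨i, rfl⟩)

/-- `1, X₀, X₁, X₂` form a `Λ`-basis of `𝒯`. -/
def basisT [Algebra (PowerSeries ℚ_[p]) (Tring p)]
    (h1 : ∀ a : ℚ_[p], algebraMap Λp (Tring p) (PowerSeries.C a)
      = algebraMap ℚ_[p] (Tring p) a)
    (h2 : algebraMap Λp (Tring p) PowerSeries.X
      = Ideal.Quotient.mk (mixedProductsIdeal p) (∑ i : Fin 4, MvPowerSeries.X i)) :
    Module.Basis (Fin 4) Λp (Tring p) := Module.Basis.mk (indep p h1 h2) (spans p h1 h2)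

end BasisSec



section HomSec

variable [Algebra (PowerSeries ℚ_[p]) (Tring p)]
variable (h1 : ∀ a : ℚ_[p], algebraMap (PowerSeries ℚ_[p]) (Tring p) (PowerSeries.C a)
      = algebraMap ℚ_[p] (Tring p) a)
variable (h2 : algebraMap (PowerSeries ℚ_[p]) (Tring p) PowerSeries.X
      = Ideal.Quotient.mk (mixedProductsIdeal p) (∑ i : Fin 4, MvPowerSeries.X i))

include h1 h2

set_option linter.unusedSectionVars false

theorem basisT_apply (i : Fin 4) : basisT p h1 h2 i = bvec p i := Module.Basis.mk_apply _ _ i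

theorem coord_basisT (j k : Fin 4) :
    (basisT p h1 h2).coord j (basisT p h1 h2 k) = if k = j then 1 else 0 := by
  rw [Module.Basis.coord_apply, Module.Basis.repr_self, Finsupp.single_apply]

theorem X_smul_one : (PowerSeries.X : Λp) • (1 : Tring p) =
    Xb p 0 + Xb p 1 + Xb p 2 + Xb p 3 := by
  rw [Algebra.smul_def, mul_one, h2, map_sum, Fin.sum_univ_four]
  rfl

theorem Xb3_eq : Xb p 3 = (PowerSeries.X : Λp) • (1 : Tring p) - Xb p 0 - Xb p 1 - Xb p 2 := by
  rw [X_smul_one p h1 h2]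
  ring

theorem Xb_mul_Xb_ne {i j : Fin 4} (hij : i ≠ j) : Xb p i * Xb p j = 0 := by
  rw [Xb, Xb, ← map_mul]
  exact Ideal.Quotient.eq_zero_iff_mem.2 (Ideal.subset_span ⟨i, j, hij, rfl⟩)

theorem Xb_sq (i : Fin 4) :
    Xb p i * Xb p i = algebraMap Λp (Tring p) PowerSeries.X * Xb p i := by
  rw [h2]
  have hs : (Ideal.Quotient.mk (mixedProductsIdeal p)) (∑ j : Fin 4, MvPowerSeries.X j)
      = ∑ j : Fin 4, Xb p j := by rw [map_sum]; rfl
  rw [hs, Finset.sum_mul]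
  rw [Finset.sum_eq_single i (fun j _ hj => Xb_mul_Xb_ne p h1 h2 hj)
    (fun h => absurd (Finset.mem_univ i) h)]

theorem coord_Xb3 (j : Fin 4) :
    (basisT p h1 h2).coord j (Xb p 3) =
      (if (0 : Fin 4) = j then (PowerSeries.X : Λp) else 0) - (if (1 : Fin 4) = j then 1 else 0)
        - (if (2 : Fin 4) = j then 1 else 0) - (if (3 : Fin 4) = j then 1 else 0) := by
  have hb0 : (1 : Tring p) = basisT p h1 h2 0 := (basisT_apply p h1 h2 0).symm
  have hb1 : Xb p 0 = basisT p h1 h2 1 := (basisT_apply p h1 h2 1).symm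
  have hb2 : Xb p 1 = basisT p h1 h2 2 := (basisT_apply p h1 h2 2).symm
  have hb3 : Xb p 2 = basisT p h1 h2 3 := (basisT_apply p h1 h2 3).symm
  rw [Xb3_eq p h1 h2, hb0, hb1, hb2, hb3, map_sub, map_sub, map_sub, map_smul,
    coord_basisT, coord_basisT, coord_basisT, coord_basisT]
  rw [smul_eq_mul, mul_ite, mul_one, mul_zero]


theorem tXb_smul {t : Tring p} (ht : t ∈ maxIdealT p) (i : Fin 4) :
    ∃ z : Tring p, t * Xb p i = algebraMap Λp (Tring p) PowerSeries.X * z := by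
  refine Submodule.span_induction ?_ ?_ ?_ ?_ ht
  · rintro x ⟨j, rfl⟩
    rcases eq_or_ne j i with rfl | hj
    · exact ⟨Xb p j, Xb_sq p h1 h2 j⟩
    · refine ⟨0, ?_⟩
      rw [mul_zero]
      exact Xb_mul_Xb_ne p h1 h2 hj
  · exact ⟨0, by rw [zero_mul, mul_zero]⟩
  · rintro x y - - ⟨z1, hz1⟩ ⟨z2, hz2⟩
    exact ⟨z1 + z2, by rw [add_mul, hz1, hz2, mul_add]⟩
  · rintro c x - ⟨z, hz⟩
    refine ⟨c * z, ?_⟩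
    rw [smul_eq_mul, mul_assoc, hz]
    ring

theorem coeff_zero_of_mem_span (ψ : Tring p →ₗ[Λp] Λp)
    (hψ : ψ ∈ Submodule.span Λp {ψ : Tring p →ₗ[Λp] Λp |
      ∃ t ∈ maxIdealT p, ∃ φ : Tring p →ₗ[Λp] Λp, ψ = φ ∘ₗ LinearMap.mulLeft Λp t})
    (i : Fin 4) : PowerSeries.coeff 0 (ψ (Xb p i)) = 0 := by
  induction hψ using Submodule.span_induction with
  | mem x hx =>
    obtain ⟨t, ht, φ, rfl⟩ := hx
    obtain ⟨z, hz⟩ := tXb_smul p h1 h2 ht i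
    have hev : (φ ∘ₗ LinearMap.mulLeft Λp t) (Xb p i) = PowerSeries.X * φ z := by
      rw [LinearMap.comp_apply, LinearMap.mulLeft_apply, hz, ← Algebra.smul_def,
        LinearMap.map_smul, smul_eq_mul]
    rw [hev, PowerSeries.coeff_zero_eq_constantCoeff, map_mul]
    simp
  | zero => simp
  | add x y hx hy ihx ihy => rw [LinearMap.add_apply, map_add, ihx, ihy, add_zero]
  | smul c x hx ih =>
    rw [LinearMap.smul_apply, smul_eq_mul, PowerSeries.coeff_zero_eq_constantCoeff, map_mul]
    rw [PowerSeries.coeff_zero_eq_constantCoeff] at ih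
    rw [ih, mul_zero]

theorem sum_coeff_zero (φ : Tring p →ₗ[Λp] Λp) :
    ∑ i, PowerSeries.coeff 0 (φ (Xb p i)) = 0 := by
  have hsum : ∑ i, φ (Xb p i) = φ ((PowerSeries.X : Λp) • (1 : Tring p)) := by
    rw [X_smul_one p h1 h2, Fin.sum_univ_four, map_add, map_add, map_add]
  rw [← map_sum, hsum, map_smul, smul_eq_mul, PowerSeries.coeff_zero_eq_constantCoeff, map_mul]
  simp

theorem mem_span_of_coeff_zero (φ : Tring p →ₗ[Λp] Λp)
    (hφ : ∀ i, PowerSeries.coeff 0 (φ (Xb p i)) = 0) :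
    φ ∈ Submodule.span Λp {ψ : Tring p →ₗ[Λp] Λp |
      ∃ t ∈ maxIdealT p, ∃ χ : Tring p →ₗ[Λp] Λp, ψ = χ ∘ₗ LinearMap.mulLeft Λp t} := by
  set b := basisT p h1 h2 with hbdef
  have hdvd : ∀ i, ∃ g : Λp, φ (Xb p i) = PowerSeries.X * g := by
    intro i
    have : (PowerSeries.X : Λp) ∣ φ (Xb p i) := PowerSeries.X_dvd_iff.2
      (by rw [← PowerSeries.coeff_zero_eq_constantCoeff]; exact hφ i)
    exact this
  choose h hh using hdvd
  set c : Λp := h 0 + h 1 + h 2 - φ 1 with hc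
  have hb0 : b 0 = 1 := (basisT_apply p h1 h2 0).trans rfl
  have hb1 : b 1 = Xb p 0 := (basisT_apply p h1 h2 1).trans rfl
  have hb2 : b 2 = Xb p 1 := (basisT_apply p h1 h2 2).trans rfl
  have hb3 : b 3 = Xb p 2 := (basisT_apply p h1 h2 3).trans rfl
  have c10 : b.coord 1 (Xb p 0) = 1 := by
    rw [← hb1]; simpa using coord_basisT p h1 h2 1 1
  have c22 : b.coord 2 (Xb p 1) = 1 := by
    rw [← hb2]; simpa using coord_basisT p h1 h2 2 2
  have c33 : b.coord 3 (Xb p 2) = 1 := by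
    rw [← hb3]; simpa using coord_basisT p h1 h2 3 3
  have c13 : b.coord 1 (Xb p 3) = -1 := by
    simpa using coord_Xb3 p h1 h2 1
  have key : φ = h 0 • (b.coord 1 ∘ₗ LinearMap.mulLeft Λp (Xb p 0))
      + h 1 • (b.coord 2 ∘ₗ LinearMap.mulLeft Λp (Xb p 1))
      + h 2 • (b.coord 3 ∘ₗ LinearMap.mulLeft Λp (Xb p 2))
      + c • (b.coord 1 ∘ₗ LinearMap.mulLeft Λp (Xb p 3)) := by
    apply b.ext
    intro k
    simp only [LinearMap.add_apply, LinearMap.smul_apply, LinearMap.comp_apply,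
      LinearMap.mulLeft_apply]
    fin_cases k <;>
      simp only [Fin.zero_eta, Fin.mk_one, show (⟨2, by omega⟩ : Fin 4) = 2 from rfl,
        show (⟨3, by omega⟩ : Fin 4) = 3 from rfl]
    · rw [show b 0 = 1 from hb0, mul_one, mul_one, mul_one, mul_one]
      rw [c10, c22, c33, c13]
      rw [hc]
      simp only [smul_eq_mul, mul_one]
      ring
    · rw [show b 1 = Xb p 0 from hb1]
      rw [Xb_sq p h1 h2 0, Xb_mul_Xb_ne p h1 h2 (show (1 : Fin 4) ≠ 0 by decide),
        Xb_mul_Xb_ne p h1 h2 (show (2 : Fin 4) ≠ 0 by decide),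
        Xb_mul_Xb_ne p h1 h2 (show (3 : Fin 4) ≠ 0 by decide),
        map_zero, map_zero, map_zero, ← Algebra.smul_def, LinearMap.map_smul, c10, hh 0]
      simp only [smul_eq_mul, mul_one, mul_zero, smul_zero]
      ring
    · rw [show b 2 = Xb p 1 from hb2]
      rw [Xb_sq p h1 h2 1, Xb_mul_Xb_ne p h1 h2 (show (0 : Fin 4) ≠ 1 by decide),
        Xb_mul_Xb_ne p h1 h2 (show (2 : Fin 4) ≠ 1 by decide),
        Xb_mul_Xb_ne p h1 h2 (show (3 : Fin 4) ≠ 1 by decide),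
        map_zero, map_zero, ← Algebra.smul_def, LinearMap.map_smul, c22, hh 1]
      simp only [smul_eq_mul, mul_one, mul_zero, smul_zero]
      ring
    · rw [show b 3 = Xb p 2 from hb3]
      rw [Xb_sq p h1 h2 2, Xb_mul_Xb_ne p h1 h2 (show (0 : Fin 4) ≠ 2 by decide),
        Xb_mul_Xb_ne p h1 h2 (show (1 : Fin 4) ≠ 2 by decide),
        Xb_mul_Xb_ne p h1 h2 (show (3 : Fin 4) ≠ 2 by decide),
        map_zero, map_zero, ← Algebra.smul_def, LinearMap.map_smul, c33, hh 2]
      simp only [smul_eq_mul, mul_one, mul_zero, smul_zero]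
      ring
  have hXbmem : ∀ i, Xb p i ∈ maxIdealT p := fun i => Ideal.subset_span ⟨i, rfl⟩
  rw [key]
  refine Submodule.add_mem _ (Submodule.add_mem _ (Submodule.add_mem _ ?_ ?_) ?_) ?_
  · exact Submodule.smul_mem _ _ (Submodule.subset_span ⟨Xb p 0, hXbmem 0, b.coord 1, rfl⟩)
  · exact Submodule.smul_mem _ _ (Submodule.subset_span ⟨Xb p 1, hXbmem 1, b.coord 2, rfl⟩)
  · exact Submodule.smul_mem _ _ (Submodule.subset_span ⟨Xb p 2, hXbmem 2, b.coord 3, rfl⟩)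
  · exact Submodule.smul_mem _ _ (Submodule.subset_span ⟨Xb p 3, hXbmem 3, b.coord 1, rfl⟩)

theorem surj_lemma (v : Fin 4 → ℚ_[p]) (hv : ∑ i, v i = 0) :
    ∃ φ : Tring p →ₗ[Λp] Λp, ∀ i, PowerSeries.coeff 0 (φ (Xb p i)) = v i := by
  set b := basisT p h1 h2 with hbdef
  have hb1 : b 1 = Xb p 0 := (basisT_apply p h1 h2 1).trans rfl
  have hb2 : b 2 = Xb p 1 := (basisT_apply p h1 h2 2).trans rfl
  have hb3 : b 3 = Xb p 2 := (basisT_apply p h1 h2 3).trans rfl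
  have hcoords : ∀ j k : Fin 4, b.coord j (b k) = if k = j then 1 else 0 :=
    coord_basisT p h1 h2
  refine ⟨PowerSeries.C (v 0) • b.coord 1 + PowerSeries.C (v 1) • b.coord 2
    + PowerSeries.C (v 2) • b.coord 3, ?_⟩
  intro i
  simp only [LinearMap.add_apply, LinearMap.smul_apply]
  fin_cases i <;>
    simp only [Fin.zero_eta, Fin.mk_one, show (⟨2, by omega⟩ : Fin 4) = 2 from rfl,
      show (⟨3, by omega⟩ : Fin 4) = 3 from rfl]
  · rw [show Xb p 0 = b 1 from hb1.symm, hcoords 1 1, hcoords 2 1, hcoords 3 1]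
    simp
  · rw [show Xb p 1 = b 2 from hb2.symm, hcoords 1 2, hcoords 2 2, hcoords 3 2]
    simp
  · rw [show Xb p 2 = b 3 from hb3.symm, hcoords 1 3, hcoords 2 3, hcoords 3 3]
    simp
  · rw [coord_Xb3 p h1 h2 1, coord_Xb3 p h1 h2 2, coord_Xb3 p h1 h2 3]
    rw [Fin.sum_univ_four] at hv
    simp only [smul_eq_mul]
    simp only [show ((0 : Fin 4) = 1) = False by simp, show ((0 : Fin 4) = 2) = False by simp,
      show ((0 : Fin 4) = 3) = False by simp]
    simp [mul_sub]
    linear_combination -hv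

end HomSec


end HG3

/-- for the `Λ = ℚ_p[[X]]`-algebra structure on `𝒯` determined by
`X ↦ X₁+X₂+X₃+X₄` (and fixing `ℚ_p`), the `𝒯`-module `Hom_Λ(𝒯, Λ)` needs exactly `3`
generators: `dim_{ℚ_p} Hom_Λ(𝒯,Λ) ⊗_𝒯 𝒯/𝔪_𝒯 = 3`, where the quotient
`Hom_Λ(𝒯,Λ)/𝔪_𝒯·Hom_Λ(𝒯,Λ)` realizes the tensor product. -/
theorem hom_needs_three_generators (p : ℕ) [Fact p.Prime]
    [Algebra (PowerSeries ℚ_[p]) (Tring p)]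
    (h1 : ∀ a : ℚ_[p],
      algebraMap (PowerSeries ℚ_[p]) (Tring p) (PowerSeries.C a) =
        algebraMap ℚ_[p] (Tring p) a)
    (h2 : algebraMap (PowerSeries ℚ_[p]) (Tring p) PowerSeries.X =
      Ideal.Quotient.mk (mixedProductsIdeal p) (∑ i : Fin 4, MvPowerSeries.X i)) :
    Module.finrank ℚ_[p]
      ((Tring p →ₗ[PowerSeries ℚ_[p]] PowerSeries ℚ_[p]) ⧸
        Submodule.span (PowerSeries ℚ_[p])
          {ψ : Tring p →ₗ[PowerSeries ℚ_[p]] PowerSeries ℚ_[p] |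
            ∃ t ∈ maxIdealT p, ∃ φ : Tring p →ₗ[PowerSeries ℚ_[p]] PowerSeries ℚ_[p],
              ψ = φ ∘ₗ LinearMap.mulLeft (PowerSeries ℚ_[p]) t}) = 3 := by
  classical
  set MM : Submodule (PowerSeries ℚ_[p])
      (Tring p →ₗ[PowerSeries ℚ_[p]] PowerSeries ℚ_[p]) :=
    Submodule.span (PowerSeries ℚ_[p])
      {ψ : Tring p →ₗ[PowerSeries ℚ_[p]] PowerSeries ℚ_[p] |
        ∃ t ∈ maxIdealT p, ∃ φ : Tring p →ₗ[PowerSeries ℚ_[p]] PowerSeries ℚ_[p],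
          ψ = φ ∘ₗ LinearMap.mulLeft (PowerSeries ℚ_[p]) t} with hMM
  -- the sum functional on `ℚ_p⁴`
  set l : (Fin 4 → ℚ_[p]) →ₗ[ℚ_[p]] ℚ_[p] := ∑ i : Fin 4, LinearMap.proj i with hldef
  have hl : ∀ v : Fin 4 → ℚ_[p], l v = ∑ i, v i := by
    intro v
    rw [hldef, LinearMap.sum_apply]
    rfl
  set V := LinearMap.ker l with hV
  -- the evaluation map
  set T0 : (Tring p →ₗ[PowerSeries ℚ_[p]] PowerSeries ℚ_[p]) →ₗ[ℚ_[p]] (Fin 4 → ℚ_[p]) :=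
    { toFun := fun φ i => PowerSeries.coeff 0 (φ (HG3.Xb p i))
      map_add' := by
        intro φ ψ
        funext i
        simp [LinearMap.add_apply]
      map_smul' := by
        intro c φ
        funext i
        simp [LinearMap.smul_apply] } with hT0def
  have hT0mem : ∀ φ, T0 φ ∈ V := by
    intro φ
    rw [hV, LinearMap.mem_ker, hl]
    exact HG3.sum_coeff_zero p h1 h2 φ
  set T' := T0.codRestrict V hT0mem with hT'
  have happ : ∀ φ i, T0 φ i = PowerSeries.coeff 0 (φ (HG3.Xb p i)) := fun φ i => rfl
  have hker : LinearMap.ker T' = MM.restrictScalars ℚ_[p] := by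
    ext φ
    rw [LinearMap.ker_codRestrict, LinearMap.mem_ker, Submodule.restrictScalars_mem]
    constructor
    · intro hφ
      exact HG3.mem_span_of_coeff_zero p h1 h2 φ (fun i => by
        rw [← happ φ i, hφ]; rfl)
    · intro hφ
      funext i
      rw [happ φ i]
      exact HG3.coeff_zero_of_mem_span p h1 h2 φ hφ i
  have hsurj : Function.Surjective T' := by
    rintro ⟨v, hv⟩
    have hv' : ∑ i, v i = 0 := by rw [← hl v]; exact LinearMap.mem_ker.1 hv
    obtain ⟨φ, hφ⟩ := HG3.surj_lemma p h1 h2 v hv'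
    refine ⟨φ, Subtype.ext ?_⟩
    funext i
    rw [show ((T' φ : V) : Fin 4 → ℚ_[p]) i = T0 φ i from rfl, happ φ i]
    exact hφ i
  -- the chain of `ℚ_p`-linear equivalences
  have e1 : ((Tring p →ₗ[PowerSeries ℚ_[p]] PowerSeries ℚ_[p]) ⧸ MM) ≃ₗ[ℚ_[p]]
      ((Tring p →ₗ[PowerSeries ℚ_[p]] PowerSeries ℚ_[p]) ⧸ MM.restrictScalars ℚ_[p]) :=
    (Submodule.Quotient.restrictScalarsEquiv ℚ_[p] MM).symm
  have e2 : ((Tring p →ₗ[PowerSeries ℚ_[p]] PowerSeries ℚ_[p]) ⧸ MM.restrictScalars ℚ_[p])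
      ≃ₗ[ℚ_[p]] ((Tring p →ₗ[PowerSeries ℚ_[p]] PowerSeries ℚ_[p]) ⧸ LinearMap.ker T') :=
    Submodule.quotEquivOfEq _ _ hker.symm
  have e3 : ((Tring p →ₗ[PowerSeries ℚ_[p]] PowerSeries ℚ_[p]) ⧸ LinearMap.ker T')
      ≃ₗ[ℚ_[p]] V := T'.quotKerEquivOfSurjective hsurj
  have hfr : Module.finrank ℚ_[p]
      ((Tring p →ₗ[PowerSeries ℚ_[p]] PowerSeries ℚ_[p]) ⧸ MM)
      = Module.finrank ℚ_[p] V := (e1.trans (e2.trans e3)).finrank_eq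
  rw [hfr]
  -- compute `finrank V = 3`
  have hlr : LinearMap.range l = ⊤ := by
    rw [LinearMap.range_eq_top]
    intro c
    refine ⟨Pi.single 0 c, ?_⟩
    rw [hl]
    simp [Pi.single_apply]
  have hrank := l.finrank_range_add_finrank_ker
  rw [hlr, finrank_top] at hrank
  have h4 : Module.finrank ℚ_[p] (Fin 4 → ℚ_[p]) = 4 := by simp
  have h1' : Module.finrank ℚ_[p] ℚ_[p] = 1 := Module.finrank_self ℚ_[p]
  rw [h4, h1'] at hrank
  rw [← hV] at hrank
  omega
end
end

section
/- Let $K$ be a field of characteristic $0$ and let $s,s',s''\in K$ be pairwise distinct, and $L_1,L_2,L_3\in K$ with $P_L(u)=L_1-L_2u-L_3u^2\ne0$ for $u\in\{s,s',s''\}$. Define $x = -\tfrac{1}{2}(L_2+2sL_3)/P_L(s)$ and similarly $x',x''$ for $s',s''$. Then the determinant of the matrix with rows $(x,x',x'')$, $(s(1-sx), s'(1-s'x'), s''(1-s''x''))$, $(1,1,1)$ equals $-\tfrac14 (s-s')(s-s'')(s'-s'')\cdot \dfrac{L_2(L_2^2+4L_1L_3)}{P_L(s)P_L(s')P_L(s'')}$.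 -/
set_option maxHeartbeats 1000000

private lemma det_div_cols {K : Type*} [Field K] (a b c p1 p2 q1 q2 r1 r2 : K)
    (ha : a ≠ 0) (hb : b ≠ 0) (hc : c ≠ 0) :
    Matrix.det !![p1 / a, q1 / b, r1 / c;
                  p2 / a, q2 / b, r2 / c;
                  1, 1, 1] =
      Matrix.det !![p1, q1, r1; p2, q2, r2; a, b, c] / (a * b * c) := by
  rw [Matrix.det_fin_three, Matrix.det_fin_three]
  simp only [Fin.isValue, Matrix.of_apply, Matrix.cons_val', Matrix.cons_val_zero,
    Matrix.empty_val', Matrix.cons_val_fin_one, Matrix.cons_val_one, Matrix.head_cons,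
    Matrix.cons_val_two, Nat.succ_eq_add_one, Nat.reduceAdd, Matrix.tail_cons,
    Matrix.head_fin_const, mul_one]
  field_simp

private lemma det_poly {K : Type*} [Field K] [CharZero K] (L1 L2 L3 s s' s'' : K) :
    Matrix.det !![-(1 / 2) * (L2 + 2 * s * L3), -(1 / 2) * (L2 + 2 * s' * L3),
                    -(1 / 2) * (L2 + 2 * s'' * L3);
                  s * ((L1 - L2 * s - L3 * s ^ 2) - s * (-(1 / 2) * (L2 + 2 * s * L3))),
                    s' * ((L1 - L2 * s' - L3 * s' ^ 2) - s' * (-(1 / 2) * (L2 + 2 * s' * L3))),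
                    s'' * ((L1 - L2 * s'' - L3 * s'' ^ 2) - s'' * (-(1 / 2) * (L2 + 2 * s'' * L3)));
                  L1 - L2 * s - L3 * s ^ 2, L1 - L2 * s' - L3 * s' ^ 2,
                    L1 - L2 * s'' - L3 * s'' ^ 2] =
      -(1 / 4) * (s - s') * (s - s'') * (s' - s'') * (L2 * (L2 ^ 2 + 4 * L1 * L3)) := by
  rw [Matrix.det_fin_three]
  simp only [Fin.isValue, Matrix.of_apply, Matrix.cons_val', Matrix.cons_val_zero,
    Matrix.empty_val', Matrix.cons_val_fin_one, Matrix.cons_val_one, Matrix.head_cons,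
    Matrix.cons_val_two, Nat.succ_eq_add_one, Nat.reduceAdd, Matrix.tail_cons,
    Matrix.head_fin_const]
  ring

/-- the 3×3 determinant identity for the slopes `x, x', x''`. -/
theorem det_three_slopes (K : Type*) [Field K] [CharZero K]
    (L1 L2 L3 s s' s'' : K)
    (hss' : s ≠ s') (hss'' : s ≠ s'') (hs's'' : s' ≠ s'')
    (hPLs : L1 - L2 * s - L3 * s ^ 2 ≠ 0)
    (hPLs' : L1 - L2 * s' - L3 * s' ^ 2 ≠ 0)
    (hPLs'' : L1 - L2 * s'' - L3 * s'' ^ 2 ≠ 0)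
    (x x' x'' : K)
    (hx : x = -(1 / 2) * (L2 + 2 * s * L3) / (L1 - L2 * s - L3 * s ^ 2))
    (hx' : x' = -(1 / 2) * (L2 + 2 * s' * L3) / (L1 - L2 * s' - L3 * s' ^ 2))
    (hx'' : x'' = -(1 / 2) * (L2 + 2 * s'' * L3) / (L1 - L2 * s'' - L3 * s'' ^ 2)) :
    Matrix.det !![x, x', x'';
                  s * (1 - s * x), s' * (1 - s' * x'), s'' * (1 - s'' * x'');
                  1, 1, 1] =
      -(1 / 4) * (s - s') * (s - s'') * (s' - s'') *
        (L2 * (L2 ^ 2 + 4 * L1 * L3)) /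
          ((L1 - L2 * s - L3 * s ^ 2) * (L1 - L2 * s' - L3 * s' ^ 2) *
            (L1 - L2 * s'' - L3 * s'' ^ 2)) := by
  have e1 : s * (1 - s * x) =
      s * ((L1 - L2 * s - L3 * s ^ 2) - s * (-(1 / 2) * (L2 + 2 * s * L3))) /
        (L1 - L2 * s - L3 * s ^ 2) := by
    rw [hx, eq_div_iff hPLs]; rw [mul_div_assoc', one_sub_div hPLs, mul_div_assoc', div_mul_cancel₀ _ hPLs]
  have e2 : s' * (1 - s' * x') =
      s' * ((L1 - L2 * s' - L3 * s' ^ 2) - s' * (-(1 / 2) * (L2 + 2 * s' * L3))) /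
        (L1 - L2 * s' - L3 * s' ^ 2) := by
    rw [hx', eq_div_iff hPLs']; rw [mul_div_assoc', one_sub_div hPLs', mul_div_assoc', div_mul_cancel₀ _ hPLs']
  have e3 : s'' * (1 - s'' * x'') =
      s'' * ((L1 - L2 * s'' - L3 * s'' ^ 2) - s'' * (-(1 / 2) * (L2 + 2 * s'' * L3))) /
        (L1 - L2 * s'' - L3 * s'' ^ 2) := by
    rw [hx'', eq_div_iff hPLs'']; rw [mul_div_assoc', one_sub_div hPLs'', mul_div_assoc', div_mul_cancel₀ _ hPLs'']
  rw [e1, e2, e3, hx, hx', hx'', det_div_cols _ _ _ _ _ _ _ _ _ hPLs hPLs' hPLs'', det_poly]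
end
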